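/- If n = 3k + 2 with k ≥ 1, then no minimum dominating set of the path P_n contains the vertex v_3. -/

import Mathlib

open Finset SimpleGraph

/-- `S` is a dominating set of `G`: every vertex outside `S` has a neighbor in `S`. -/
def domSet {V : Type*} (G : SimpleGraph V) (S : Finset V) : Prop :=
  ∀ v, v ∉ S → ∃ u ∈ S, G.Adj u v

/-- The domination number `γ(G)`: least cardinality of a dominating set. -/
noncomputable def domNum {V : Type*} [Fintype V] (G : SimpleGraph V) : ℕ :=
  sInf {k | ∃ S : Finset V, domSet G S ∧ S.card = k}

/-- The dominion `ζ(G)`: the number of dominating sets of minimum cardinality. -/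
noncomputable def dominion {V : Type*} [Fintype V] (G : SimpleGraph V) : ℕ :=
  Nat.card {S : Finset V // domSet G S ∧ S.card = domNum G}

/-- the closed neighborhood of `u` in `pathGraph n`, as a filter -/
def clos (n : ℕ) (u : Fin n) : Finset (Fin n) :=
  Finset.univ.filter (fun v => v.val = u.val ∨ v.val + 1 = u.val ∨ u.val + 1 = v.val)

lemma clos_card_le (n : ℕ) (u : Fin n) : (clos n u).card ≤ 3 := by
  have h : (clos n u).card ≤ ({u.val - 1, u.val, u.val + 1} : Finset ℕ).card := by
    apply Finset.card_le_card_of_injOn Fin.val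
    · intro v hv
      simp only [Finset.mem_coe, clos, Finset.mem_filter, Finset.mem_univ, true_and] at hv
      simp only [Finset.mem_coe, Finset.mem_insert, Finset.mem_singleton]
      omega
    · intro a _ b _ hab
      exact Fin.val_injective hab
  have h1 := Finset.card_insert_le (u.val - 1) ({u.val, u.val + 1} : Finset ℕ)
  have h2 := Finset.card_insert_le (u.val : ℕ) ({u.val + 1} : Finset ℕ)
  simp only [Finset.card_singleton] at h1 h2
  omega

theorem stmt9 (n k : ℕ) (hk : 1 ≤ k) (hn : n = 3 * k + 2) (S : Finset (Fin n))
    (hS : domSet (pathGraph n) S) (hcard : S.card = domNum (pathGraph n)) :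
    (⟨2, by omega⟩ : Fin n) ∉ S := by
  intro h2
  -- explicit dominating set of size k+1
  have hW : ∃ W : Finset (Fin n), domSet (pathGraph n) W ∧ W.card = k + 1 := by
    refine ⟨(Finset.univ : Finset (Fin (k+1))).image
      (fun i => (⟨3 * i.val + 1, by omega⟩ : Fin n)), ?_, ?_⟩
    · intro v hv
      have hv3 : v.val % 3 = 0 ∨ v.val % 3 = 2 := by
        have h3 : v.val % 3 = 0 ∨ v.val % 3 = 1 ∨ v.val % 3 = 2 := by omega
        rcases h3 with h | h | h
        · exact Or.inl h
        · exfalso; apply hv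
          simp only [Finset.mem_image, Finset.mem_univ, true_and]
          refine ⟨⟨v.val / 3, by omega⟩, ?_⟩
          apply Fin.ext
          simp
          omega
        · exact Or.inr h
      rcases hv3 with h | h
      · refine ⟨⟨v.val + 1, by omega⟩, ?_, ?_⟩
        · simp only [Finset.mem_image, Finset.mem_univ, true_and]
          refine ⟨⟨v.val / 3, by omega⟩, Fin.ext ?_⟩
          simp; omega
        · rw [pathGraph_adj]; right; simp
      · refine ⟨⟨v.val - 1, by omega⟩, ?_, ?_⟩
        · simp only [Finset.mem_image, Finset.mem_univ, true_and]
          refine ⟨⟨v.val / 3, by omega⟩, Fin.ext ?_⟩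
          simp; omega
        · rw [pathGraph_adj]; left; simp; omega
    · rw [Finset.card_image_of_injective]
      · simp
      · intro a b hab
        have := congrArg Fin.val hab
        simp at this
        exact Fin.ext (by omega)
  -- hence S.card ≤ k + 1
  obtain ⟨W, hWdom, hWcard⟩ := hW
  have hle : S.card ≤ k + 1 := by
    rw [hcard]
    exact Nat.sInf_le ⟨W, hWdom, hWcard⟩
  -- vertex 0 needs a dominator with val ≤ 1
  set v0 : Fin n := ⟨0, by omega⟩ with hv0
  have hw : ∃ w ∈ S, w.val ≤ 1 := by
    by_cases h0 : v0 ∈ S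
    · exact ⟨v0, h0, by simp [hv0]⟩
    · obtain ⟨u, hu, hadj⟩ := hS v0 h0
      rw [pathGraph_adj] at hadj
      exact ⟨u, hu, by simp [hv0] at hadj; omega⟩
  obtain ⟨w, hwS, hw1⟩ := hw
  -- A = S.filter (3 ≤ val)
  set A : Finset (Fin n) := S.filter (fun u => 3 ≤ u.val) with hA
  -- B contains w and vertex 2
  have hB2 : 2 ≤ (S.filter (fun u => ¬ 3 ≤ u.val)).card := by
    have hsub : ({w, ⟨2, by omega⟩} : Finset (Fin n)) ⊆
        S.filter (fun u => ¬ 3 ≤ u.val) := by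
      intro x hx
      simp only [Finset.mem_insert, Finset.mem_singleton] at hx
      rcases hx with rfl | rfl
      · simp only [Finset.mem_filter]; exact ⟨hwS, by omega⟩
      · simp only [Finset.mem_filter]; exact ⟨h2, by simp⟩
    have hcard2 : ({w, ⟨2, by omega⟩} : Finset (Fin n)).card = 2 := by
      rw [Finset.card_insert_of_notMem, Finset.card_singleton]
      simp only [Finset.mem_singleton]
      intro h
      have := congrArg Fin.val h
      simp at this
      omega
    rw [← hcard2]
    exact Finset.card_le_card hsub
  -- each vertex with val ≥ 4 is in the closed neighborhood of some element of A
  have hcover : Finset.univ.filter (fun v : Fin n => 4 ≤ v.val) ⊆ A.biUnion (clos n) := by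
    intro v hv
    simp only [Finset.mem_filter, Finset.mem_univ, true_and] at hv
    rw [Finset.mem_biUnion]
    by_cases hvS : v ∈ S
    · refine ⟨v, ?_, ?_⟩
      · rw [hA, Finset.mem_filter]; exact ⟨hvS, by omega⟩
      · simp [clos]
    · obtain ⟨u, hu, hadj⟩ := hS v hvS
      rw [pathGraph_adj] at hadj
      refine ⟨u, ?_, ?_⟩
      · rw [hA, Finset.mem_filter]
        exact ⟨hu, by omega⟩
      · simp only [clos, Finset.mem_filter, Finset.mem_univ, true_and]
        omega
  -- count: n - 4 ≤ card of the filter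
  have hTcard : n - 4 ≤ (Finset.univ.filter (fun v : Fin n => 4 ≤ v.val)).card := by
    have hc : (Finset.univ : Finset (Fin (n - 4))).card ≤
        (Finset.univ.filter (fun v : Fin n => 4 ≤ v.val)).card := by
      apply Finset.card_le_card_of_injOn
        (fun i : Fin (n - 4) => (⟨i.val + 4, by omega⟩ : Fin n))
      · intro i _
        simp
      · intro a _ b _ hab
        have := congrArg Fin.val hab
        simp at this
        exact Fin.ext (by omega)
    simpa using hc
  have hbound : (A.biUnion (clos n)).card ≤ 3 * A.card := by
    calc (A.biUnion (clos n)).card ≤ ∑ u ∈ A, (clos n u).card :=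
          Finset.card_biUnion_le
      _ ≤ ∑ _u ∈ A, 3 := Finset.sum_le_sum (fun u _ => clos_card_le n u)
      _ = 3 * A.card := by rw [Finset.sum_const, smul_eq_mul, mul_comm]
  have hAk : k ≤ A.card := by
    have := hTcard.trans ((Finset.card_le_card hcover).trans hbound)
    omega
  have hsplit : A.card + (S.filter (fun u => ¬ 3 ≤ u.val)).card = S.card :=
    Finset.card_filter_add_card_filter_not _
  omega
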